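/- For every even integer p ≥ 0 and every even integer q ≥ 2 there exists a constant c > 0, independent of n, k₁ and k₂, such that for all integers n ≥ 1 and all 1 ≤ k₁, k₂ ≤ n one has E(k₁ + p/2, k₂ + q/2 − 1) ≤ c · √n · 2^{k₁ + k₂} · Γ(k₂ + q/2 − 3/2) · Γ(k₁ + p/2 − 1/2). -/

import Mathlib

open MeasureTheory Set Real

/-- Partial sums of the binomial-type series `∑ Γ(i+a)/(2^i i!)` are bounded by `2^a Γ(a)`. -/
lemma sum_gamma_le (a : ℝ) (ha : 0 < a) (k : ℕ) :
    ∑ i ∈ Finset.range k, Real.Gamma ((i : ℝ) + a) / (2 ^ i * (i.factorial : ℝ)) ≤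
      (2 : ℝ) ^ a * Real.Gamma a := by
  have hint : ∀ i : ℕ, IntegrableOn
      (fun x : ℝ => (Real.exp (-x) * x ^ ((i : ℝ) + a - 1)) / (2 ^ i * (i.factorial : ℝ)))
      (Ioi 0) := by
    intro i
    exact (Real.GammaIntegral_convergent (by positivity)).div_const _
  have h1 : ∑ i ∈ Finset.range k, Real.Gamma ((i : ℝ) + a) / (2 ^ i * (i.factorial : ℝ))
      = ∫ x in Ioi 0, ∑ i ∈ Finset.range k,
          (Real.exp (-x) * x ^ ((i : ℝ) + a - 1)) / (2 ^ i * (i.factorial : ℝ)) := by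
    rw [MeasureTheory.integral_finset_sum _ (fun i _ => hint i)]
    refine Finset.sum_congr rfl fun i _ => ?_
    rw [Real.Gamma_eq_integral (by positivity), MeasureTheory.integral_div]
  rw [h1]
  have h2 : ∫ x in Ioi 0, x ^ (a - 1) * Real.exp (-((1/2 : ℝ) * x))
      = (2 : ℝ) ^ a * Real.Gamma a := by
    rw [Real.integral_rpow_mul_exp_neg_mul_Ioi ha (by norm_num : (0:ℝ) < 1/2)]
    norm_num
  rw [← h2]
  refine setIntegral_mono_on (MeasureTheory.integrable_finset_sum _ (fun i _ => hint i)) ?_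
      measurableSet_Ioi ?_
  · have := integrableOn_rpow_mul_exp_neg_mul_rpow (p := 1) (s := a - 1) (b := 1/2)
      (by linarith) one_pos (by norm_num)
    refine this.congr_fun (fun x hx => ?_) measurableSet_Ioi
    dsimp only
    rw [Real.rpow_one, neg_mul]
  · intro x hx
    have hx' : (0:ℝ) < x := hx
    have key : ∀ i : ℕ, (Real.exp (-x) * x ^ ((i : ℝ) + a - 1)) / (2 ^ i * (i.factorial : ℝ))
        = (x ^ (a - 1) * Real.exp (-x)) * ((x/2) ^ i / (i.factorial : ℝ)) := by
      intro i
      have : x ^ ((i : ℝ) + a - 1) = x ^ (i : ℕ) * x ^ (a - 1) := by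
        rw [← Real.rpow_natCast x i, ← Real.rpow_add hx']
        ring_nf
      rw [this, div_pow]
      field_simp
    simp_rw [key, ← Finset.mul_sum]
    have hsum : ∑ i ∈ Finset.range k, (x/2) ^ i / (i.factorial : ℝ) ≤ Real.exp (x/2) :=
      Real.sum_le_exp_of_nonneg (by positivity) k
    calc (x ^ (a - 1) * Real.exp (-x)) * ∑ i ∈ Finset.range k, (x/2) ^ i / (i.factorial : ℝ)
        ≤ (x ^ (a - 1) * Real.exp (-x)) * Real.exp (x/2) := by
          apply mul_le_mul_of_nonneg_left hsum (by positivity)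
      _ = x ^ (a - 1) * Real.exp (-((1/2 : ℝ) * x)) := by
          rw [mul_assoc, ← Real.exp_add]; ring_nf

/-- Gautschi-type inequality from log-convexity: `Γ(x+1/2) ≤ Γ(x) √x`. -/
lemma gamma_add_half_le (x : ℝ) (hx : 0 < x) :
    Real.Gamma (x + 1/2) ≤ Real.Gamma x * Real.sqrt x := by
  have h := Real.Gamma_mul_add_mul_le_rpow_Gamma_mul_rpow_Gamma hx
    (by linarith : (0:ℝ) < x + 1) (by norm_num : (0:ℝ) < 1/2) (by norm_num : (0:ℝ) < 1/2)
    (by norm_num)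
  have harg : (1/2 : ℝ) * x + (1/2 : ℝ) * (x + 1) = x + 1/2 := by ring
  rw [harg, Real.Gamma_add_one hx.ne'] at h
  have hΓ : 0 < Real.Gamma x := Real.Gamma_pos_of_pos hx
  calc Real.Gamma (x + 1/2) ≤ Real.Gamma x ^ (1/2 : ℝ) * (x * Real.Gamma x) ^ (1/2 : ℝ) := h
    _ = Real.Gamma x * Real.sqrt x := by
        rw [Real.mul_rpow hx.le hΓ.le, ← Real.sqrt_eq_rpow, ← Real.sqrt_eq_rpow]
        rw [show Real.sqrt (Real.Gamma x) * (Real.sqrt x * Real.sqrt (Real.Gamma x))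
            = (Real.sqrt (Real.Gamma x) * Real.sqrt (Real.Gamma x)) * Real.sqrt x by ring,
          Real.mul_self_sqrt hΓ.le]

/-- `E(j,k) = (k-1)! 2^{k-1} ∑_{i=0}^{k-1} Γ(i+j-1/2)/(2^i i!)`. -/
noncomputable def Efun (j k : ℕ) : ℝ :=
  ((k - 1).factorial : ℝ) * 2 ^ (k - 1) *
    ∑ i ∈ Finset.range k, Real.Gamma ((i : ℝ) + (j : ℝ) - 1 / 2) / (2 ^ i * (i.factorial : ℝ))

/-- Uniform bound on the error term `E(k₁+p/2, k₂+q/2-1)`. -/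
theorem Efun_bound (p q : ℕ) (hp : Even p) (hq : Even q) (hq2 : 2 ≤ q) :
    ∃ c : ℝ, 0 < c ∧ ∀ n : ℕ, 1 ≤ n → ∀ k₁ k₂ : ℕ,
      1 ≤ k₁ → k₁ ≤ n → 1 ≤ k₂ → k₂ ≤ n →
      Efun (k₁ + p / 2) (k₂ + q / 2 - 1) ≤
        c * Real.sqrt n * 2 ^ (k₁ + k₂) *
          Real.Gamma ((k₂ : ℝ) + (q : ℝ) / 2 - 3 / 2) *
          Real.Gamma ((k₁ : ℝ) + (p : ℝ) / 2 - 1 / 2) := by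
  obtain ⟨l, rfl⟩ := hp
  obtain ⟨m, rfl⟩ := hq
  have hm : 1 ≤ m := by omega
  refine ⟨2 ^ (l + m) * Real.sqrt (1 + (m : ℝ)), by positivity, ?_⟩
  intro n hn k₁ k₂ hk₁ hk₁n hk₂ hk₂n
  have hdivp : (l + l) / 2 = l := by omega
  have hdivq : (m + m) / 2 = m := by omega
  rw [hdivp, hdivq]
  set a : ℝ := (k₁ : ℝ) + l - 1/2 with ha_def
  set x : ℝ := (k₂ : ℝ) + m - 3/2 with hx_def
  have hk₁' : (1 : ℝ) ≤ (k₁ : ℝ) := by exact_mod_cast hk₁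
  have hk₂' : (1 : ℝ) ≤ (k₂ : ℝ) := by exact_mod_cast hk₂
  have hm' : (1 : ℝ) ≤ (m : ℝ) := by exact_mod_cast hm
  have hn' : (1 : ℝ) ≤ (n : ℝ) := by exact_mod_cast hn
  have hk₂n' : (k₂ : ℝ) ≤ (n : ℝ) := by exact_mod_cast hk₂n
  have ha : 0 < a := by rw [ha_def]; have : (0:ℝ) ≤ l := Nat.cast_nonneg l; linarith
  have hx : 0 < x := by rw [hx_def]; linarith
  have hargq : (k₂ : ℝ) + ((m + m : ℕ) : ℝ) / 2 - 3/2 = x := by push_cast; ring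
  have hargp : (k₁ : ℝ) + ((l + l : ℕ) : ℝ) / 2 - 1/2 = a := by push_cast; ring
  rw [hargq, hargp]
  set K : ℕ := k₂ + m - 1 with hK_def
  have hK1 : 1 ≤ K := by omega
  have hKc : ((K - 1 : ℕ) : ℝ) = x - 1/2 := by
    have e : K - 1 + 2 = k₂ + m := by omega
    have := congrArg (fun t : ℕ => (t : ℝ)) e
    push_cast at this
    rw [hx_def]; linarith
  -- `Efun (k₁+l) K` unfolded
  have hSa : ∑ i ∈ Finset.range K,
      Real.Gamma ((i : ℝ) + ((k₁ + l : ℕ) : ℝ) - 1 / 2) / (2 ^ i * (i.factorial : ℝ))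
      = ∑ i ∈ Finset.range K, Real.Gamma ((i : ℝ) + a) / (2 ^ i * (i.factorial : ℝ)) := by
    refine Finset.sum_congr rfl fun i _ => ?_
    congr 1
    rw [ha_def]; push_cast; ring
  have hS : ∑ i ∈ Finset.range K,
      Real.Gamma ((i : ℝ) + ((k₁ + l : ℕ) : ℝ) - 1 / 2) / (2 ^ i * (i.factorial : ℝ))
      ≤ (2 : ℝ) ^ a * Real.Gamma a := hSa ▸ sum_gamma_le a ha K
  have hS0 : (0:ℝ) ≤ ∑ i ∈ Finset.range K,
      Real.Gamma ((i : ℝ) + ((k₁ + l : ℕ) : ℝ) - 1 / 2) / (2 ^ i * (i.factorial : ℝ)) := by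
    refine Finset.sum_nonneg fun i _ => div_nonneg (Real.Gamma_nonneg_of_nonneg ?_) (by positivity)
    have h1' : 1 ≤ k₁ + l := by omega
    have h1 : (1:ℝ) ≤ ((k₁ + l : ℕ) : ℝ) := by exact_mod_cast h1'
    have h2 : (0:ℝ) ≤ (i : ℝ) := Nat.cast_nonneg i
    linarith
  have hfact : (((K - 1).factorial : ℕ) : ℝ) = Real.Gamma (x + 1/2) := by
    rw [← Real.Gamma_nat_eq_factorial (K - 1)]
    congr 1
    rw [hKc]; ring
  have hΓx : 0 < Real.Gamma x := Real.Gamma_pos_of_pos hx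
  have hΓa : 0 < Real.Gamma a := Real.Gamma_pos_of_pos ha
  have hΓK : (((K - 1).factorial : ℕ) : ℝ) ≤ Real.Gamma x * Real.sqrt x := by
    rw [hfact]; exact gamma_add_half_le x hx
  have hsx : Real.sqrt x ≤ Real.sqrt n * Real.sqrt (1 + (m : ℝ)) := by
    rw [← Real.sqrt_mul (Nat.cast_nonneg n)]
    apply Real.sqrt_le_sqrt
    rw [hx_def]
    nlinarith
  have hpow1 : (2:ℝ) ^ (K - 1) ≤ (2:ℝ) ^ (k₂ + m) :=
    pow_le_pow_right₀ one_le_two (by omega)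
  have hpow2 : (2:ℝ) ^ a ≤ (2:ℝ) ^ (k₁ + l) := by
    rw [← Real.rpow_natCast 2 (k₁ + l)]
    apply Real.rpow_le_rpow_of_exponent_le one_le_two
    rw [ha_def]; push_cast; linarith
  show Efun (k₁ + l) K ≤ _
  rw [Efun]
  calc (((K - 1).factorial : ℕ) : ℝ) * 2 ^ (K - 1) * ∑ i ∈ Finset.range K,
        Real.Gamma ((i : ℝ) + ((k₁ + l : ℕ) : ℝ) - 1 / 2) / (2 ^ i * (i.factorial : ℝ))
      ≤ (Real.Gamma x * (Real.sqrt n * Real.sqrt (1 + (m : ℝ)))) * 2 ^ (k₂ + m) *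
          ((2:ℝ) ^ (k₁ + l) * Real.Gamma a) := by
        have step1 : (((K - 1).factorial : ℕ) : ℝ) * 2 ^ (K - 1) * ∑ i ∈ Finset.range K,
            Real.Gamma ((i : ℝ) + ((k₁ + l : ℕ) : ℝ) - 1 / 2) / (2 ^ i * (i.factorial : ℝ))
            ≤ (Real.Gamma x * Real.sqrt x) * 2 ^ (K - 1) * ((2:ℝ) ^ a * Real.Gamma a) := by
          apply mul_le_mul
          · exact mul_le_mul_of_nonneg_right hΓK (by positivity)
          · exact hS
          · exact hS0
          · positivity
        refine step1.trans ?_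
        apply mul_le_mul
        · apply mul_le_mul
          · exact mul_le_mul_of_nonneg_left hsx hΓx.le
          · exact hpow1
          · positivity
          · positivity
        · exact mul_le_mul_of_nonneg_right hpow2 hΓa.le
        · positivity
        · positivity
    _ = 2 ^ (l + m) * Real.sqrt (1 + (m : ℝ)) * Real.sqrt n * 2 ^ (k₁ + k₂) *
          Real.Gamma x * Real.Gamma a := by
        rw [pow_add, pow_add, pow_add]; ring
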